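/- The generating function t(λ) = h(λ)² − 2h′(λ) + 2(2X⁻(λ) + ξ)X⁺(λ) of the twisted Gaudin model admits the pole expansion t(λ) = ∑_{a=1}^{N} ( c₂(a)/(λ − z_a)² + 2H^(a)/(λ − z_a) ) + ξ² ∑_{a,b=1}^{N} X⁺_a X⁺_b, where c₂(a) = h_a² + 2h_a + 4X⁻_a X⁺_a and H^(a) = ∑_{b≠a} ( (h_a h_b + 2(X⁺_a X⁻_b + X⁻_a X⁺_b))/(z_a − z_b) + ξ(h_a X⁺_b − X⁺_a h_b) ). -/

import Mathlib

open Finset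

variable {H : Type*} [NormedAddCommGroup H] [NormedSpace ℂ H]

/-- h(λ) = ∑_a (h_a/(λ−z_a) + ξX⁺_a) -/
noncomputable def hTw {N : ℕ} (z : Fin N → ℂ) (ξ : ℂ)
    (hA XpA : Fin N → (H →L[ℂ] H)) (lam : ℂ) : H →L[ℂ] H :=
  ∑ a, ((lam - z a)⁻¹ • hA a + ξ • XpA a)

/-- X⁺(λ) = ∑_a X⁺_a/(λ−z_a) -/
noncomputable def XpL {N : ℕ} (z : Fin N → ℂ)
    (XpA : Fin N → (H →L[ℂ] H)) (lam : ℂ) : H →L[ℂ] H :=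
  ∑ a, (lam - z a)⁻¹ • XpA a

/-- X⁻(λ) = ∑_a (X⁻_a/(λ−z_a) − (ξ/2)h_a) -/
noncomputable def XmL {N : ℕ} (z : Fin N → ℂ) (ξ : ℂ)
    (XmA hA : Fin N → (H →L[ℂ] H)) (lam : ℂ) : H →L[ℂ] H :=
  ∑ a, ((lam - z a)⁻¹ • XmA a - (ξ / 2) • hA a)

/-- the twisted generating function t(λ) = h(λ)² − 2h′(λ) + 2(2X⁻(λ)+ξ)X⁺(λ) -/
noncomputable def tTw {N : ℕ} (z : Fin N → ℂ) (ξ : ℂ)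
    (hA XpA XmA : Fin N → (H →L[ℂ] H)) (lam : ℂ) : H →L[ℂ] H :=
  hTw z ξ hA XpA lam * hTw z ξ hA XpA lam
    - (2 : ℂ) • deriv (hTw z ξ hA XpA) lam
    + (2 : ℂ) • (((2 : ℂ) • XmL z ξ XmA hA lam + ξ • (1 : H →L[ℂ] H)) * XpL z XpA lam)

lemma keySym {ι M : Type*} [AddCommMonoid M] [Module ℂ M] (s : Finset ι)
    (f g : ι → ι → M) (h : ∀ a ∈ s, ∀ b ∈ s, f a b + f b a = g a b + g b a) :
    ∑ a ∈ s, ∑ b ∈ s, f a b = ∑ a ∈ s, ∑ b ∈ s, g a b := by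
  have key : ∀ F : ι → ι → M, (2:ℂ) • (∑ a ∈ s, ∑ b ∈ s, F a b)
      = ∑ a ∈ s, ∑ b ∈ s, (F a b + F b a) := by
    intro F
    rw [two_smul]
    calc (∑ a ∈ s, ∑ b ∈ s, F a b) + ∑ a ∈ s, ∑ b ∈ s, F a b
        = (∑ a ∈ s, ∑ b ∈ s, F a b) + ∑ a ∈ s, ∑ b ∈ s, F b a := by
          rw [Finset.sum_comm (f := fun a b => F b a)]
      _ = ∑ a ∈ s, ∑ b ∈ s, (F a b + F b a) := by
          rw [← Finset.sum_add_distrib]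
          exact Finset.sum_congr rfl fun a _ => (Finset.sum_add_distrib).symm
  have h2 : (2:ℂ) • (∑ a ∈ s, ∑ b ∈ s, f a b) = (2:ℂ) • (∑ a ∈ s, ∑ b ∈ s, g a b) := by
    rw [key, key]
    exact Finset.sum_congr rfl fun a ha => Finset.sum_congr rfl fun b hb => h a ha b hb
  calc ∑ a ∈ s, ∑ b ∈ s, f a b
      = ((2:ℂ)⁻¹ * 2) • ∑ a ∈ s, ∑ b ∈ s, f a b := by norm_num
    _ = (2:ℂ)⁻¹ • ((2:ℂ) • ∑ a ∈ s, ∑ b ∈ s, f a b) := by rw [mul_smul]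
    _ = (2:ℂ)⁻¹ • ((2:ℂ) • ∑ a ∈ s, ∑ b ∈ s, g a b) := by rw [h2]
    _ = ((2:ℂ)⁻¹ * 2) • ∑ a ∈ s, ∑ b ∈ s, g a b := by rw [mul_smul]
    _ = _ := by norm_num

lemma hTw_deriv {N : ℕ} (z : Fin N → ℂ) (ξ : ℂ)
    (hA XpA : Fin N → (H →L[ℂ] H)) (lam : ℂ) (hlam : ∀ a, lam ≠ z a) :
    deriv (hTw z ξ hA XpA) lam = ∑ a, (-(((lam - z a) ^ 2)⁻¹)) • hA a := by
  have hd : HasDerivAt (hTw z ξ hA XpA) (∑ a, (-(((lam - z a) ^ 2)⁻¹)) • hA a) lam := by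
    apply HasDerivAt.fun_sum
    intro a _
    have h1 : HasDerivAt (fun x : ℂ => (x - z a)⁻¹) (-1 / (lam - z a) ^ 2) lam :=
      ((hasDerivAt_id lam).sub_const (z a)).inv (sub_ne_zero.mpr (hlam a))
    have h2 := (h1.smul_const (hA a)).add_const (ξ • XpA a)
    convert h2 using 2
    ring
  exact hd.deriv

noncomputable def Fq {N : ℕ} (z : Fin N → ℂ) (ξ : ℂ)
    (hA XpA XmA : Fin N → (H →L[ℂ] H)) (lam : ℂ) (a b : Fin N) : H →L[ℂ] H :=
  ((lam - z a)⁻¹ • hA a + ξ • XpA a) * ((lam - z b)⁻¹ • hA b + ξ • XpA b)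
    + (if a = b then ((2:ℂ) * ((lam - z a)⁻¹ * (lam - z a)⁻¹)) • hA a
          + ((2:ℂ) * ξ * (lam - z a)⁻¹) • XpA a else 0)
    + ((4:ℂ) * ((lam - z a)⁻¹ * (lam - z b)⁻¹)) • (XmA a * XpA b)
    - ((2:ℂ) * ξ * (lam - z b)⁻¹) • (hA a * XpA b)

noncomputable def Gq {N : ℕ} (z : Fin N → ℂ) (ξ : ℂ)
    (hA XpA XmA : Fin N → (H →L[ℂ] H)) (lam : ℂ) (a b : Fin N) : H →L[ℂ] H :=
  (if a = b then ((lam - z a) ^ 2)⁻¹ •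
      (hA a * hA a + (2:ℂ) • hA a + (4:ℂ) • (XmA a * XpA a)) else 0)
    + (if a = b then 0 else
        (2 * (lam - z a)⁻¹) •
          ((z a - z b)⁻¹ • (hA a * hA b + (2:ℂ) • (XpA a * XmA b + XmA a * XpA b))
            + ξ • (hA a * XpA b - XpA a * hA b)))
    + ξ ^ 2 • (XpA a * XpA b)


lemma step1 {N : ℕ} (z : Fin N → ℂ) (ξ : ℂ)
    (hA XpA XmA : Fin N → (H →L[ℂ] H)) (lam : ℂ) (hlam : ∀ a, lam ≠ z a) :
    tTw z ξ hA XpA XmA lam = ∑ a, ∑ b, Fq z ξ hA XpA XmA lam a b := by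
  have hu2 : ∀ a : Fin N, ((lam - z a) ^ 2)⁻¹ = (lam - z a)⁻¹ * (lam - z a)⁻¹ := by
    intro a; rw [sq, mul_inv]
  unfold tTw
  rw [hTw_deriv z ξ hA XpA lam hlam]
  unfold hTw XpL XmL
  have h2 : (2:ℂ) • ∑ a, (-(((lam - z a) ^ 2)⁻¹)) • hA a
      = ∑ a : Fin N, ∑ b : Fin N,
          (if a = b then (-((2:ℂ) * ((lam - z a)⁻¹ * (lam - z a)⁻¹))) • hA a else 0) := by
    rw [Finset.smul_sum]
    refine Finset.sum_congr rfl fun a _ => ?_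
    rw [Finset.sum_ite_eq Finset.univ a
      (fun _ => (-((2:ℂ) * ((lam - z a)⁻¹ * (lam - z a)⁻¹))) • hA a)]
    simp only [Finset.mem_univ, if_true]
    rw [smul_smul]
    congr 1
    rw [hu2]; ring
  have h3 : (2:ℂ) • (((2:ℂ) • ∑ a, ((lam - z a)⁻¹ • XmA a - (ξ / 2) • hA a)
        + ξ • (1 : H →L[ℂ] H)) * ∑ a, (lam - z a)⁻¹ • XpA a)
      = ∑ a : Fin N, ∑ b : Fin N,
          (((4:ℂ) * ((lam - z a)⁻¹ * (lam - z b)⁻¹)) • (XmA a * XpA b)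
            - ((2:ℂ) * ξ * (lam - z b)⁻¹) • (hA a * XpA b)
            + (if a = b then ((2:ℂ) * ξ * (lam - z a)⁻¹) • XpA a else 0)) := by
    rw [add_mul]
    rw [smul_mul_assoc]
    rw [smul_mul_assoc]
    rw [one_mul]
    rw [smul_add]
    rw [smul_smul]
    rw [smul_smul]
    rw [Finset.sum_mul_sum]
    rw [Finset.smul_sum]
    rw [Finset.smul_sum]
    rw [← Finset.sum_add_distrib]
    refine Finset.sum_congr rfl fun a _ => ?_
    rw [Finset.smul_sum]
    rw [Finset.sum_add_distrib (s := Finset.univ)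
      (f := fun b => ((4:ℂ) * ((lam - z a)⁻¹ * (lam - z b)⁻¹)) • (XmA a * XpA b)
            - ((2:ℂ) * ξ * (lam - z b)⁻¹) • (hA a * XpA b))
      (g := fun b => (if a = b then ((2:ℂ) * ξ * (lam - z a)⁻¹) • XpA a else 0))]
    rw [Finset.sum_ite_eq Finset.univ a (fun _ => ((2:ℂ) * ξ * (lam - z a)⁻¹) • XpA a)]
    simp only [Finset.mem_univ, if_true]
    congr 1
    · refine Finset.sum_congr rfl fun b _ => ?_
      simp only [sub_mul, smul_mul_assoc, mul_smul_comm, smul_smul, smul_sub]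
      module
    · module
  rw [Finset.sum_mul_sum, h2, h3]
  rw [← Finset.sum_sub_distrib, ← Finset.sum_add_distrib]
  refine Finset.sum_congr rfl fun a _ => ?_
  rw [← Finset.sum_sub_distrib, ← Finset.sum_add_distrib]
  refine Finset.sum_congr rfl fun b _ => ?_
  unfold Fq
  by_cases hab : a = b
  · subst hab; simp only [if_pos rfl, if_true]
    module
  · simp only [if_neg hab, sub_zero, add_zero]
    module

lemma step3 {N : ℕ} (z : Fin N → ℂ) (ξ : ℂ)
    (hA XpA XmA : Fin N → (H →L[ℂ] H)) (lam : ℂ) :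
    ∑ a, ∑ b, Gq z ξ hA XpA XmA lam a b =
      ∑ a, (((lam - z a) ^ 2)⁻¹ •
              (hA a * hA a + (2 : ℂ) • hA a + (4 : ℂ) • (XmA a * XpA a))
            + (2 * (lam - z a)⁻¹) •
              ∑ b ∈ Finset.univ.erase a,
                ((z a - z b)⁻¹ •
                    (hA a * hA b + (2 : ℂ) • (XpA a * XmA b + XmA a * XpA b))
                  + ξ • (hA a * XpA b - XpA a * hA b)))
        + ξ ^ 2 • ∑ a, ∑ b, XpA a * XpA b := by
  rw [Finset.smul_sum (r := ξ ^ 2) (f := fun a => ∑ b, XpA a * XpA b) (s := Finset.univ)]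
  rw [← Finset.sum_add_distrib]
  refine Finset.sum_congr rfl fun a _ => ?_
  unfold Gq
  rw [Finset.sum_add_distrib, Finset.sum_add_distrib]
  congr 1
  · congr 1
    · simp
    · symm
      rw [Finset.smul_sum]
      rw [show (Finset.univ.erase a) = Finset.univ.filter (fun b => ¬ (a = b)) from
        (Finset.filter_ne Finset.univ a).symm]
      rw [Finset.sum_filter]
      refine Finset.sum_congr rfl fun b _ => ?_
      by_cases h : a = b <;> simp [h]
  · exact (Finset.smul_sum).symm


set_option maxHeartbeats 1000000 in
lemma pairEq {N : ℕ} (z : Fin N → ℂ) (hz : Function.Injective z) (ξ : ℂ)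
    (hA XpA XmA : Fin N → (H →L[ℂ] H))
    (hhh : ∀ a b, hA a * hA b = hA b * hA a)
    (hhXp : ∀ a b, hA a * XpA b - XpA b * hA a = if a = b then (2 : ℂ) • XpA a else 0)
    (hXpXm : ∀ a b, XpA a * XmA b - XmA b * XpA a = if a = b then hA a else 0)
    (hXpXp : ∀ a b, XpA a * XpA b = XpA b * XpA a)
    (lam : ℂ) (hlam : ∀ a, lam ≠ z a) (a b : Fin N) :
    Fq z ξ hA XpA XmA lam a b + Fq z ξ hA XpA XmA lam b a
      = Gq z ξ hA XpA XmA lam a b + Gq z ξ hA XpA XmA lam b a := by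
  have hua : lam - z a ≠ 0 := sub_ne_zero.mpr (hlam a)
  have hub : lam - z b ≠ 0 := sub_ne_zero.mpr (hlam b)
  unfold Fq Gq
  by_cases hab : a = b
  · subst hab
    have hpa : hA a * XpA a = (2:ℂ) • XpA a + XpA a * hA a := by
      have := hhXp a a
      rw [if_pos rfl] at this
      exact sub_eq_iff_eq_add.mp this
    simp only [if_pos rfl, if_true]
    simp only [add_mul, mul_add, smul_mul_assoc, mul_smul_comm, smul_smul]
    rw [hpa]
    match_scalars <;> field_simp <;> ring
  · have hba : ¬ (b = a) := fun h => hab h.symm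
    have hzz : z a - z b ≠ 0 := sub_ne_zero.mpr (fun h => hab (hz h))
    have hzz' : z b - z a ≠ 0 := sub_ne_zero.mpr (fun h => hba (hz h))
    have e1 : hA b * hA a = hA a * hA b := hhh b a
    have e2 : hA a * XpA b = XpA b * hA a := by
      have := hhXp a b; rw [if_neg hab] at this; exact sub_eq_zero.mp this
    have e3 : hA b * XpA a = XpA a * hA b := by
      have := hhXp b a; rw [if_neg hba] at this; exact sub_eq_zero.mp this
    have e4 : XpA a * XmA b = XmA b * XpA a := by
      have := hXpXm a b; rw [if_neg hab] at this; exact sub_eq_zero.mp this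
    have e5 : XpA b * XmA a = XmA a * XpA b := by
      have := hXpXm b a; rw [if_neg hba] at this; exact sub_eq_zero.mp this
    have e6 : XpA b * XpA a = XpA a * XpA b := hXpXp b a
    simp only [if_neg hab, if_neg hba, zero_add, add_zero, sub_zero]
    simp only [add_mul, mul_add, smul_mul_assoc, mul_smul_comm, smul_smul]
    rw [e1, e2, e3, e4, e5, e6]
    match_scalars <;> field_simp <;> ring

/-- the pole expansion
    t(λ) = ∑_a ( c₂(a)/(λ−z_a)² + 2H^(a)/(λ−z_a) ) + ξ² ∑_{a,b} X⁺_aX⁺_b, with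
    c₂(a) = h_a² + 2h_a + 4X⁻_aX⁺_a and
    H^(a) = ∑_{b≠a} ( (h_ah_b + 2(X⁺_aX⁻_b + X⁻_aX⁺_b))/(z_a−z_b) + ξ(h_aX⁺_b − X⁺_ah_b) ). -/
theorem tTw_pole_expansion
    (N : ℕ) (z : Fin N → ℂ) (hz : Function.Injective z) (ξ : ℂ)
    (hA XpA XmA : Fin N → (H →L[ℂ] H))
    (hhh : ∀ a b, hA a * hA b = hA b * hA a)
    (hhXp : ∀ a b, hA a * XpA b - XpA b * hA a = if a = b then (2 : ℂ) • XpA a else 0)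
    (hhXm : ∀ a b, hA a * XmA b - XmA b * hA a = if a = b then (-2 : ℂ) • XmA a else 0)
    (hXpXm : ∀ a b, XpA a * XmA b - XmA b * XpA a = if a = b then hA a else 0)
    (hXpXp : ∀ a b, XpA a * XpA b = XpA b * XpA a)
    (hXmXm : ∀ a b, XmA a * XmA b = XmA b * XmA a)
    (lam : ℂ) (hlam : ∀ a, lam ≠ z a) :
    tTw z ξ hA XpA XmA lam =
      ∑ a, (((lam - z a) ^ 2)⁻¹ •
              (hA a * hA a + (2 : ℂ) • hA a + (4 : ℂ) • (XmA a * XpA a))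
            + (2 * (lam - z a)⁻¹) •
              ∑ b ∈ Finset.univ.erase a,
                ((z a - z b)⁻¹ •
                    (hA a * hA b + (2 : ℂ) • (XpA a * XmA b + XmA a * XpA b))
                  + ξ • (hA a * XpA b - XpA a * hA b)))
        + ξ ^ 2 • ∑ a, ∑ b, XpA a * XpA b := by
  calc tTw z ξ hA XpA XmA lam
      = ∑ a, ∑ b, Fq z ξ hA XpA XmA lam a b := step1 z ξ hA XpA XmA lam hlam
    _ = ∑ a, ∑ b, Gq z ξ hA XpA XmA lam a b :=
        keySym Finset.univ _ _ (fun a _ b _ =>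
          pairEq z hz ξ hA XpA XmA hhh hhXp hXpXm hXpXp lam hlam a b)
    _ = _ := step3 z ξ hA XpA XmA lam
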